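/- arXiv:2508.20017 — 3 statements merged into one kernel-verified Lean document; each statement's English description precedes it below -/
import Mathlib

section
/- Let α, β, ζ be probability measures on ℝ^d with finite first moment, let π¹ be a martingale coupling of (α, β) (i.e. a coupling whose disintegration kernels have barycenter equal to the first coordinate), and let π² be a coupling of (α, ζ). Then there exist random variables A, B, Z on a common probability space such that (A,B) has law π¹, (A,Z) has law π², and E[B | A, Z] = A almost surely. -/
open MeasureTheory ProbabilityTheory Filter Set
open scoped ENNReal RealInnerProductSpace

noncomputable section

abbrev Eu (d : ℕ) := EuclideanSpace ℝ (Fin d)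

/-- A coupling of two probability measures on `ℝ^d`. -/
def IsCoupling {d : ℕ} (r : Measure (Eu d × Eu d)) (p q : Measure (Eu d)) : Prop :=
  IsProbabilityMeasure r ∧ r.map Prod.fst = p ∧ r.map Prod.snd = q

/-- Finite first moment. -/
def HasFst {d : ℕ} (p : Measure (Eu d)) : Prop := Integrable (fun x => ‖x‖) p

/-- Given a martingale coupling `π¹ = α ⊗ κ1` of `(α, β)` (the disintegration kernel `κ1`
has barycenter equal to the first coordinate) and a coupling `π²` of `(α, ζ)`, there are
random variables `A, B, Z` on a common probability space with `(A,B) ∼ π¹`, `(A,Z) ∼ π²`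
and `E[B | A, Z] = A` almost surely. -/
theorem statement0 {d : ℕ} (α β ζ : Measure (Eu d))
    [IsProbabilityMeasure α] [IsProbabilityMeasure β] [IsProbabilityMeasure ζ]
    (hα : HasFst α) (hβ : HasFst β) (hζ : HasFst ζ)
    (π1 π2 : Measure (Eu d × Eu d))
    (κ1 : Kernel (Eu d) (Eu d)) [IsMarkovKernel κ1]
    (hπ1 : π1 = α.compProd κ1)
    (hπ1c : IsCoupling π1 α β)
    (hmart : ∀ᵐ a ∂α, ∫ b, b ∂(κ1 a) = a)
    (hπ2c : IsCoupling π2 α ζ) :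
    ∃ (Ω : Type) (mΩ : MeasurableSpace Ω) (P : Measure Ω) (_ : IsProbabilityMeasure P)
      (A B Z : Ω → Eu d), Measurable A ∧ Measurable B ∧ Measurable Z ∧
        P.map (fun ω => (A ω, B ω)) = π1 ∧
        P.map (fun ω => (A ω, Z ω)) = π2 ∧
        P[B | MeasurableSpace.comap (fun ω => (A ω, Z ω)) inferInstance] =ᵐ[P] A := by
  obtain ⟨hπ2prob, hπ2fst, hπ2snd⟩ := hπ2c
  obtain ⟨hπ1prob, hπ1fst, hπ1snd⟩ := hπ1c
  set η : Kernel (Eu d × Eu d) (Eu d) := κ1.comap Prod.fst measurable_fst with hη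
  have hηapp : ∀ p : Eu d × Eu d, η p = κ1 p.1 := fun p => rfl
  set P : Measure ((Eu d × Eu d) × Eu d) := π2.compProd η with hP
  have hPprob : IsProbabilityMeasure P := by infer_instance
  set A : (Eu d × Eu d) × Eu d → Eu d := fun ω => ω.1.1 with hA
  set B : (Eu d × Eu d) × Eu d → Eu d := fun ω => ω.2 with hB
  set Z : (Eu d × Eu d) × Eu d → Eu d := fun ω => ω.1.2 with hZ
  have hAm : Measurable A := measurable_fst.comp measurable_fst
  have hBm : Measurable B := measurable_snd
  have hZm : Measurable Z := measurable_snd.comp measurable_fst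
  -- the (A,Z) map is `Prod.fst`
  have hAZ : (fun ω : (Eu d × Eu d) × Eu d => (A ω, Z ω)) = Prod.fst := rfl
  have hPfst : P.map Prod.fst = π2 := by
    rw [hP, ← Measure.fst, Measure.fst_compProd]
  -- law of (A, B)
  have hAB : P.map (fun ω => (A ω, B ω)) = π1 := by
    rw [hπ1]
    ext s hs
    rw [Measure.map_apply (hAm.prodMk hBm) hs, hP,
      Measure.compProd_apply ((hAm.prodMk hBm) hs),
      Measure.compProd_apply hs]
    have : ∀ p : Eu d × Eu d, η p (Prod.mk p ⁻¹' ((fun ω => (A ω, B ω)) ⁻¹' s))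
        = κ1 p.1 (Prod.mk p.1 ⁻¹' s) := fun p => rfl
    simp_rw [this]
    rw [← hπ2fst, lintegral_map (Kernel.measurable_kernel_prodMk_left hs) measurable_fst]
  -- law of A is α
  have hAlaw : P.map A = α := by
    have : A = Prod.fst ∘ Prod.fst := rfl
    rw [this, ← Measure.map_map measurable_fst measurable_fst, hPfst, hπ2fst]
  -- integrability of B
  have hBlaw : P.map B = β := by
    rw [← hπ1snd, hπ1]
    ext s hs
    rw [Measure.map_apply hBm hs, hP, Measure.compProd_apply (hBm hs),
      Measure.map_apply measurable_snd hs,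
      Measure.compProd_apply (measurable_snd hs)]
    have h1 : ∀ p : Eu d × Eu d, η p (Prod.mk p ⁻¹' (Prod.snd ⁻¹' s)) = κ1 p.1 s := fun p => rfl
    have h2 : ∀ a : Eu d, κ1 a (Prod.mk a ⁻¹' (Prod.snd ⁻¹' s)) = κ1 a s := fun a => rfl
    simp_rw [show B = Prod.snd from rfl, h1, h2]
    rw [← hπ2fst, lintegral_map (κ1.measurable_coe hs) measurable_fst]
  have hβint : Integrable (id : Eu d → Eu d) β :=
    (integrable_norm_iff aestronglyMeasurable_id).mp hβ
  have hBint : Integrable B P := by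
    have := (integrable_map_measure (f := B) (g := id)
      (hBlaw ▸ hβint.1) hBm.aemeasurable).mp (hBlaw ▸ hβint)
    simpa using this
  -- conditional expectation via condDistrib
  have hcond := condExp_ae_eq_integral_condDistrib' (X := Prod.fst) (Y := B) (μ := P)
    measurable_fst hBint
  -- identify condDistrib with η
  have hκeq : P.map (fun x => (Prod.fst x, B x)) = (P.map Prod.fst).compProd η := by
    have : (fun x : (Eu d × Eu d) × Eu d => (Prod.fst x, B x)) = id := rfl
    rw [this, Measure.map_id, hPfst, hP]
  have hηcd := (condDistrib_ae_eq_of_measure_eq_compProd_of_measurable (μ := P)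
    measurable_fst hBm (κ := η) hκeq).symm
  have hηcd' : ∀ᵐ ω ∂P, η ω.1 = condDistrib B Prod.fst P ω.1 :=
    ae_of_ae_map measurable_fst.aemeasurable hηcd
  -- martingale property a.e. on P
  have hmartP : ∀ᵐ ω ∂P, ∫ b, b ∂(κ1 (A ω)) = A ω := by
    rw [← hAlaw] at hmart
    exact ae_of_ae_map hAm.aemeasurable hmart
  refine ⟨(Eu d × Eu d) × Eu d, inferInstance, P, hPprob, A, B, Z, hAm, hBm, hZm, hAB, ?_, ?_⟩
  · rw [hAZ, hPfst]
  · rw [hAZ]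
    refine hcond.trans ?_
    filter_upwards [hηcd', hmartP] with ω h1 h2
    rw [← h1, hηapp, h2]
end
end

section
/- Let μ be a probability measure on ℝ^d concentrated on a Borel set I, let (Iⱼ)ⱼ be Borel sets with μ(I \ ⋃ⱼ Iⱼ) = 0 and μ(Iⱼ) > 0 for all j, let μⱼ := μ(Iⱼ ∩ ·)/μ(Iⱼ), and let (π_x)_x be a Markov kernel from ℝ^d to ℝ^d. Define ν := ∫ π_x μ(dx) and νⱼ := ∫ π_x μⱼ(dx). Let h, hₙ : ℝ^d → ℝ be Borel functions. Then hₙ → h in ν-measure if and only if hₙ → h in νⱼ-measure for every j. -/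
open MeasureTheory ProbabilityTheory Filter Set
open scoped ENNReal Topology

noncomputable section

/-- With `μ` concentrated on `I`, covered (mod `μ`) by sets `Iⱼ` of positive measure,
`μⱼ` the normalized restrictions, a Markov kernel `(π_x)_x`, `ν = ∫ π_x μ(dx)` and
`νⱼ = ∫ π_x μⱼ(dx)`: convergence in `ν`-measure is equivalent to convergence in
`νⱼ`-measure for every `j`. -/
theorem statement5 {d : ℕ} (μ : Measure (Eu d)) [IsProbabilityMeasure μ]
    (I : Set (Eu d)) (hI : MeasurableSet I) (hμI : μ Iᶜ = 0)
    (Is : ℕ → Set (Eu d)) (hIs : ∀ j, MeasurableSet (Is j))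
    (hcover : μ (I \ ⋃ j, Is j) = 0) (hpos : ∀ j, 0 < μ (Is j))
    (κ : Kernel (Eu d) (Eu d)) [IsMarkovKernel κ]
    (h : Eu d → ℝ) (hn : ℕ → Eu d → ℝ)
    (hh : Measurable h) (hhn : ∀ n, Measurable (hn n)) :
    TendstoInMeasure (μ.bind fun x => κ x) hn atTop h ↔
      ∀ j, TendstoInMeasure
        (((μ (Is j))⁻¹ • μ.restrict (Is j)).bind fun x => κ x) hn atTop h := by
  -- notation
  set c : ℕ → ℝ≥0∞ := fun j => (μ (Is j))⁻¹ with hc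
  have hμIs_ne_top : ∀ j, μ (Is j) ≠ ∞ := fun j => measure_ne_top μ _
  have hμIs_ne_zero : ∀ j, μ (Is j) ≠ 0 := fun j => (hpos j).ne'
  have hc_ne_top : ∀ j, c j ≠ ∞ := fun j => by
    simp [hc, ENNReal.inv_ne_top, hμIs_ne_zero j]
  have hA : ∀ (n : ℕ) (ε : ℝ≥0∞), MeasurableSet {x | ε ≤ edist (hn n x) (h x)} := by
    intro n ε
    exact measurableSet_le measurable_const ((hhn n).edist hh)
  have hν : ∀ s : Set (Eu d), MeasurableSet s →
      (μ.bind fun x => κ x) s = ∫⁻ x, κ x s ∂μ := by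
    intro s hs
    rw [Measure.bind_apply hs κ.measurable.aemeasurable]
  have hνj : ∀ (j : ℕ) (s : Set (Eu d)), MeasurableSet s →
      ((c j • μ.restrict (Is j)).bind fun x => κ x) s
        = c j * ∫⁻ x in Is j, κ x s ∂μ := by
    intro j s hs
    rw [Measure.bind_apply hs κ.measurable.aemeasurable, lintegral_smul_measure, smul_eq_mul]
  constructor
  · -- forward
    intro H j ε hε
    have Hε := H ε hε
    have hbound : ∀ n, ((c j • μ.restrict (Is j)).bind fun x => κ x)
          {x | ε ≤ edist (hn n x) (h x)} ≤
        c j * (μ.bind fun x => κ x) {x | ε ≤ edist (hn n x) (h x)} := by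
      intro n
      rw [hνj j _ (hA n ε), hν _ (hA n ε)]
      exact mul_le_mul_right (setLIntegral_le_lintegral _ _) _
    have hlim : Tendsto (fun n => c j * (μ.bind fun x => κ x)
        {x | ε ≤ edist (hn n x) (h x)}) atTop (𝓝 0) := by
      have := ENNReal.Tendsto.const_mul Hε (Or.inr (hc_ne_top j))
      simpa using this
    exact tendsto_of_tendsto_of_tendsto_of_le_of_le tendsto_const_nhds hlim
      (fun n => zero_le) hbound
  · -- backward
    intro H ε hε
    set A : ℕ → Set (Eu d) := fun n => {x | ε ≤ edist (hn n x) (h x)} with hAdef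
    -- each local integral tends to 0
    have hLj : ∀ j, Tendsto (fun n => ∫⁻ x in Is j, κ x (A n) ∂μ) atTop (𝓝 0) := by
      intro j
      have Hj := H j ε hε
      have heq : ∀ n, ∫⁻ x in Is j, κ x (A n) ∂μ =
          (c j)⁻¹ * (((c j • μ.restrict (Is j)).bind fun x => κ x) (A n)) := by
        intro n
        rw [hνj j _ (hA n ε), ← mul_assoc, ENNReal.inv_mul_cancel
          (by simp [hc, hμIs_ne_top j]) (hc_ne_top j), one_mul]
      simp only [heq]
      have := ENNReal.Tendsto.const_mul Hj
        (Or.inr (by simp [hc, hμIs_ne_zero j] : (c j)⁻¹ ≠ ∞))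
      simpa [hc, hAdef] using this
    -- truncated unions
    set B : ℕ → Set (Eu d) := fun k => ⋃ j : Fin k, Is j with hBdef
    have hBmeas : ∀ k, MeasurableSet (B k) := fun k =>
      MeasurableSet.iUnion fun j => hIs j
    have hU : μ (⋃ j, Is j)ᶜ = 0 := by
      have hsub : (⋃ j, Is j)ᶜ ⊆ Iᶜ ∪ (I \ ⋃ j, Is j) := by
        intro x hx
        by_cases hxI : x ∈ I
        · exact Or.inr ⟨hxI, hx⟩
        · exact Or.inl hxI
      refine le_antisymm (le_trans (measure_mono hsub) ?_) (zero_le)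
      calc μ (Iᶜ ∪ (I \ ⋃ j, Is j)) ≤ μ Iᶜ + μ (I \ ⋃ j, Is j) := measure_union_le _ _
        _ = 0 := by rw [hμI, hcover, add_zero]
    -- μ (B k)ᶜ → 0
    have hCtend : Tendsto (fun k => μ ((⋃ j, Is j) \ B k)) atTop (𝓝 0) := by
      have hanti : Antitone fun k => (⋃ j, Is j) \ B k := by
        intro k l hkl
        apply diff_subset_diff_right
        exact iUnion_subset fun j => subset_iUnion (fun i : Fin l => Is i) ⟨j, lt_of_lt_of_le j.2 hkl⟩
      have hinter : ⋂ k, ((⋃ j, Is j) \ B k) = ∅ := by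
        ext x
        simp only [mem_iInter, mem_empty_iff_false, iff_false]
        intro hx
        obtain ⟨hxU, -⟩ := hx 0
        obtain ⟨j, hj⟩ := mem_iUnion.1 hxU
        exact (hx (j + 1)).2 (mem_iUnion.2 ⟨⟨j, Nat.lt_succ_self j⟩, hj⟩)
      have := tendsto_measure_iInter_atTop
        (μ := μ) (s := fun k => (⋃ j, Is j) \ B k)
        (fun k => ((MeasurableSet.iUnion fun j => hIs j).diff (hBmeas k)).nullMeasurableSet)
        hanti ⟨0, measure_ne_top μ _⟩
      rw [hinter] at this
      simpa [Function.comp_def] using this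
    have hBc : ∀ k, μ (B k)ᶜ ≤ μ ((⋃ j, Is j) \ B k) := by
      intro k
      have hsub : (B k)ᶜ ⊆ ((⋃ j, Is j) \ B k) ∪ (⋃ j, Is j)ᶜ := by
        intro x hx
        by_cases hxU : x ∈ ⋃ j, Is j
        · exact Or.inl ⟨hxU, hx⟩
        · exact Or.inr hxU
      calc μ (B k)ᶜ ≤ μ (((⋃ j, Is j) \ B k) ∪ (⋃ j, Is j)ᶜ) := measure_mono hsub
        _ ≤ μ ((⋃ j, Is j) \ B k) + μ (⋃ j, Is j)ᶜ := measure_union_le _ _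
        _ = μ ((⋃ j, Is j) \ B k) := by rw [hU, add_zero]
    -- main estimate
    rw [ENNReal.tendsto_nhds_zero]
    intro δ hδ
    have hδ2 : (0 : ℝ≥0∞) < δ / 2 := ENNReal.half_pos hδ.ne'
    -- choose k with μ (B k)ᶜ ≤ δ/2
    obtain ⟨k, hk⟩ := (hCtend.eventually_le_const hδ2).exists
    have hμBk : μ (B k)ᶜ ≤ δ / 2 := le_trans (hBc k) hk
    -- the finite sum tends to 0
    have hsum : Tendsto (fun n => ∑ j : Fin k, ∫⁻ x in Is j, κ x (A n) ∂μ)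
        atTop (𝓝 0) := by
      have := tendsto_finset_sum (Finset.univ : Finset (Fin k))
        (fun j _ => hLj (j : ℕ))
      simpa using this
    filter_upwards [hsum.eventually_le_const hδ2] with n hns
    have key : (μ.bind fun x => κ x) (A n) ≤
        (∑ j : Fin k, ∫⁻ x in Is j, κ x (A n) ∂μ) + μ (B k)ᶜ := by
      rw [hν _ (hA n ε)]
      have hsplit : ∫⁻ x, κ x (A n) ∂μ
          = (∫⁻ x in B k, κ x (A n) ∂μ) + ∫⁻ x in (B k)ᶜ, κ x (A n) ∂μ := by
        rw [← lintegral_add_compl _ (hBmeas k)]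
      rw [hsplit]
      gcongr
      · calc ∫⁻ x in B k, κ x (A n) ∂μ ≤ ∑' j : Fin k, ∫⁻ x in Is j, κ x (A n) ∂μ :=
              lintegral_iUnion_le _ _
          _ = ∑ j : Fin k, ∫⁻ x in Is j, κ x (A n) ∂μ := tsum_fintype _
      · calc ∫⁻ x in (B k)ᶜ, κ x (A n) ∂μ ≤ ∫⁻ _ in (B k)ᶜ, 1 ∂μ := by
              apply lintegral_mono; intro x; exact prob_le_one
          _ = μ (B k)ᶜ := by simp
    calc (μ.bind fun x => κ x) (A n)
        ≤ (∑ j : Fin k, ∫⁻ x in Is j, κ x (A n) ∂μ) + μ (B k)ᶜ := key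
      _ ≤ δ / 2 + δ / 2 := add_le_add hns hμBk
      _ = δ := ENNReal.add_halves δ
end
end

section
/- Let μ ≤_c ν be probability measures on ℝ^d with finite second moments, π^{SBM} the stretched Brownian motion between μ and ν with disintegration (π_x^{SBM})_x, and B ⊆ ℝ^d Borel with μ(B) > 0. Define μ^B := μ(B ∩ ·)/μ(B), ν^B := ∫ π_x^{SBM} μ^B(dx), and π^B(dx,dy) := μ^B(dx) π_x^{SBM}(dy). Then π^B is the stretched Brownian motion between μ^B and ν^B. -/
open MeasureTheory ProbabilityTheory Filter Set
open scoped ENNReal RealInnerProductSpace Topology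

noncomputable section

/-- The maximal covariance `MCov(p,q) = sup_{r ∈ Cpl(p,q)} ∫ ⟨x,y⟩ dr`. -/
def MCov {d : ℕ} (p q : Measure (Eu d)) : ℝ :=
  sSup {c | ∃ r : Measure (Eu d × Eu d), IsCoupling r p q ∧ c = ∫ z, (inner ℝ z.1 z.2 : ℝ) ∂r}

/-- The squared 2-Wasserstein distance `W₂²(p,q) = inf_{r ∈ Cpl(p,q)} ∫ ‖x-y‖² dr`. -/
def W2sq {d : ℕ} (p q : Measure (Eu d)) : ℝ :=
  sInf {c | ∃ r : Measure (Eu d × Eu d), IsCoupling r p q ∧ c = ∫ z, ‖z.1 - z.2‖ ^ 2 ∂r}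

/-- The barycenter of a measure. -/
def bary {d : ℕ} (p : Measure (Eu d)) : Eu d := ∫ x, x ∂p

/-- Finite second moment. -/
def HasSnd {d : ℕ} (p : Measure (Eu d)) : Prop := Integrable (fun x => ‖x‖ ^ 2) p

/-- Convex order of probability measures. -/
def ConvexOrder {d : ℕ} (p q : Measure (Eu d)) : Prop :=
  ∀ f : Eu d → ℝ, ConvexOn ℝ Set.univ f → Integrable f p → Integrable f q →
    ∫ x, f x ∂p ≤ ∫ x, f x ∂q

/-- The standard Gaussian measure on `ℝ^d`. -/
def stdGaussian (d : ℕ) : Measure (Eu d) :=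
  (Measure.pi fun _ : Fin d => ProbabilityTheory.gaussianReal 0 1).map
    (MeasurableEquiv.toLp 2 (Fin d → ℝ))

/-- `p ∈ P₂^x(ℝ^d)`: probability measure with finite second moment and barycenter `x`. -/
def MemP2x {d : ℕ} (p : Measure (Eu d)) (x : Eu d) : Prop :=
  IsProbabilityMeasure p ∧ HasSnd p ∧ bary p = x

/-! ### Auxiliary lemmas -/

lemma map_eval_pi' {ι : Type*} [Fintype ι] {α : ι → Type*} [∀ i, MeasurableSpace (α i)]
    (μ : ∀ i, Measure (α i)) [∀ i, IsProbabilityMeasure (μ i)] (i : ι) :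
    (Measure.pi μ).map (Function.eval i) = μ i := by
  classical
  ext s hs
  rw [Measure.map_apply (measurable_pi_apply i) hs, Set.eval_preimage, Measure.pi_pi]
  rw [Finset.prod_eq_single i (fun j _ hj => by simp [Function.update_of_ne hj])
    (by simp)]
  simp

lemma integrable_sq_gaussianReal : Integrable (fun x : ℝ => x ^ 2) (gaussianReal 0 1) := by
  rw [gaussianReal_of_var_ne_zero 0 one_ne_zero]
  rw [integrable_withDensity_iff (measurable_gaussianPDF 0 1)
    (ae_of_all _ fun x => ENNReal.ofReal_lt_top)]
  have heq : (fun x : ℝ => x ^ 2 * (gaussianPDF 0 1 x).toReal)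
      = fun x : ℝ => (Real.sqrt (2 * Real.pi))⁻¹ * (x ^ 2 * Real.exp (-(1/2 : ℝ) * x ^ 2)) := by
    funext x
    rw [gaussianPDF_def, ENNReal.toReal_ofReal (gaussianPDFReal_nonneg _ _ _),
      gaussianPDFReal_def]
    push_cast
    ring_nf
  rw [heq]
  have h2 : Integrable (fun x : ℝ => x ^ (2 : ℝ) * Real.exp (-(1/2 : ℝ) * x ^ 2)) :=
    integrable_rpow_mul_exp_neg_mul_sq (by norm_num) (by norm_num)
  have h2' : Integrable (fun x : ℝ => x ^ 2 * Real.exp (-(1/2 : ℝ) * x ^ 2)) := by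
    have : (fun x : ℝ => x ^ (2 : ℝ) * Real.exp (-(1/2 : ℝ) * x ^ 2))
        = fun x : ℝ => x ^ 2 * Real.exp (-(1/2 : ℝ) * x ^ 2) := by
      funext x
      rw [show ((2 : ℝ) = ((2 : ℕ) : ℝ)) by norm_num, Real.rpow_natCast]
    rwa [this] at h2
  exact h2'.const_mul _

lemma isProbabilityMeasure_stdGaussian (d : ℕ) : IsProbabilityMeasure (stdGaussian d) := by
  rw [_root_.stdGaussian]
  exact Measure.isProbabilityMeasure_map (MeasurableEquiv.measurable _).aemeasurable

lemma hasSnd_stdGaussian (d : ℕ) : HasSnd (stdGaussian d) := by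
  rw [HasSnd, _root_.stdGaussian, integrable_map_equiv _]
  have heq : ((fun x : Eu d => ‖x‖ ^ 2) ∘ (MeasurableEquiv.toLp 2 (Fin d → ℝ)))
      = fun a : Fin d → ℝ => ∑ i, a i ^ 2 := by
    funext a
    simp only [Function.comp_apply]
    rw [EuclideanSpace.norm_eq, Real.sq_sqrt (by positivity)]
    refine Finset.sum_congr rfl fun i _ => ?_
    rw [Real.norm_eq_abs, sq_abs]
    rfl
  rw [heq]
  apply integrable_finset_sum
  intro i _
  have hmap : (Measure.pi fun _ : Fin d => gaussianReal 0 1).map (Function.eval i)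
      = gaussianReal 0 1 := map_eval_pi' _ i
  have hmp : MeasurePreserving (Function.eval i)
      (Measure.pi fun _ : Fin d => gaussianReal 0 1) (gaussianReal 0 1) :=
    ⟨measurable_pi_apply i, hmap⟩
  have := (hmp.integrable_comp ((continuous_pow 2).aestronglyMeasurable)).mpr
    integrable_sq_gaussianReal
  exact this

lemma mcov_le_moments {d : ℕ} (p q : Measure (Eu d)) (hp : HasSnd p) (hq : HasSnd q) :
    MCov p q ≤ ∫ x, ‖x‖ ^ 2 ∂p + ∫ y, ‖y‖ ^ 2 ∂q := by
  have hnn : 0 ≤ ∫ x, ‖x‖ ^ 2 ∂p + ∫ y, ‖y‖ ^ 2 ∂q :=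
    add_nonneg (integral_nonneg fun x => by positivity) (integral_nonneg fun x => by positivity)
  refine Real.sSup_le ?_ hnn
  rintro c ⟨r, ⟨hrP, h1, h2⟩, rfl⟩
  have hcont : Continuous (fun x : Eu d => ‖x‖ ^ 2) := (continuous_norm).pow 2
  have hint1 : Integrable (fun z : Eu d × Eu d => ‖z.1‖ ^ 2) r := by
    have h := hp
    rw [← h1] at h
    have := (integrable_map_measure hcont.aestronglyMeasurable
      measurable_fst.aemeasurable).mp h
    exact this
  have hint2 : Integrable (fun z : Eu d × Eu d => ‖z.2‖ ^ 2) r := by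
    have h := hq
    rw [← h2] at h
    have := (integrable_map_measure hcont.aestronglyMeasurable
      measurable_snd.aemeasurable).mp h
    exact this
  have h1' : ∫ x, ‖x‖ ^ 2 ∂p = ∫ z : Eu d × Eu d, ‖z.1‖ ^ 2 ∂r := by
    rw [← h1, integral_map measurable_fst.aemeasurable hcont.aestronglyMeasurable]
  have h2' : ∫ y, ‖y‖ ^ 2 ∂q = ∫ z : Eu d × Eu d, ‖z.2‖ ^ 2 ∂r := by
    rw [← h2, integral_map measurable_snd.aemeasurable hcont.aestronglyMeasurable]
  have hpt : ∀ z : Eu d × Eu d, (inner ℝ z.1 z.2 : ℝ) ≤ ‖z.1‖ ^ 2 + ‖z.2‖ ^ 2 := by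
    intro z
    have h := real_inner_le_norm z.1 z.2
    nlinarith [norm_nonneg z.1, norm_nonneg z.2, sq_nonneg (‖z.1‖ - ‖z.2‖)]
  by_cases hI : Integrable (fun z : Eu d × Eu d => (inner ℝ z.1 z.2 : ℝ)) r
  · calc ∫ z : Eu d × Eu d, (inner ℝ z.1 z.2 : ℝ) ∂r
        ≤ ∫ z : Eu d × Eu d, (‖z.1‖ ^ 2 + ‖z.2‖ ^ 2) ∂r := integral_mono hI (hint1.add hint2) hpt
    _ = ∫ x, ‖x‖ ^ 2 ∂p + ∫ y, ‖y‖ ^ 2 ∂q := by rw [integral_add hint1 hint2, h1', h2']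
  · rw [integral_undef hI]; exact hnn

lemma lintegral_mcov_ne_top {d : ℕ} (μ ν : Measure (Eu d)) [IsProbabilityMeasure μ]
    (h2ν : HasSnd ν) (κ : Kernel (Eu d) (Eu d)) [IsMarkovKernel κ]
    (hmarg : μ.bind (fun x => κ x) = ν) (hker : ∀ᵐ x ∂μ, MemP2x (κ x) x) :
    ∫⁻ x, ENNReal.ofReal (MCov (κ x) (stdGaussian d)) ∂μ ≠ ∞ := by
  haveI := isProbabilityMeasure_stdGaussian d
  set Cγ := ∫ y, ‖y‖ ^ 2 ∂(stdGaussian d) with hCγ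
  have hstep : ∀ᵐ x ∂μ, ENNReal.ofReal (MCov (κ x) (stdGaussian d))
      ≤ (∫⁻ y, ENNReal.ofReal (‖y‖ ^ 2) ∂(κ x)) + ENNReal.ofReal Cγ := by
    filter_upwards [hker] with x hx
    have hx2 : HasSnd (κ x) := hx.2.1
    have h1 : MCov (κ x) (stdGaussian d) ≤ ∫ y, ‖y‖ ^ 2 ∂(κ x) + Cγ :=
      mcov_le_moments _ _ hx2 (hasSnd_stdGaussian d)
    calc ENNReal.ofReal (MCov (κ x) (stdGaussian d))
        ≤ ENNReal.ofReal (∫ y, ‖y‖ ^ 2 ∂(κ x) + Cγ) := ENNReal.ofReal_le_ofReal h1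
    _ ≤ ENNReal.ofReal (∫ y, ‖y‖ ^ 2 ∂(κ x)) + ENNReal.ofReal Cγ := ENNReal.ofReal_add_le
    _ ≤ (∫⁻ y, ENNReal.ofReal (‖y‖ ^ 2) ∂(κ x)) + ENNReal.ofReal Cγ := by
        rw [ofReal_integral_eq_lintegral_ofReal hx2 (ae_of_all _ fun y => by positivity)]
  have hmono := lintegral_mono_ae hstep
  rw [lintegral_add_right _ measurable_const, lintegral_const, measure_univ, mul_one] at hmono
  have hmeas : Measurable (fun y : Eu d => ENNReal.ofReal (‖y‖ ^ 2)) :=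
    ENNReal.measurable_ofReal.comp ((measurable_norm).pow_const 2)
  have hbind : ∫⁻ x, ∫⁻ y, ENNReal.ofReal (‖y‖ ^ 2) ∂(κ x) ∂μ
      = ∫⁻ y, ENNReal.ofReal (‖y‖ ^ 2) ∂ν := by
    rw [← hmarg, Measure.lintegral_bind (Kernel.measurable κ).aemeasurable hmeas.aemeasurable]
  have hν : ∫⁻ y, ENNReal.ofReal (‖y‖ ^ 2) ∂ν < ∞ := by
    have h := h2ν.hasFiniteIntegral
    rw [HasFiniteIntegral] at h
    refine lt_of_le_of_lt (le_of_eq (lintegral_congr fun y => ?_)) h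
    rw [← Real.enorm_eq_ofReal (by positivity)]
  rw [hbind] at hmono
  exact ne_top_of_le_ne_top (ENNReal.add_ne_top.mpr ⟨hν.ne, ENNReal.ofReal_ne_top⟩) hmono

/-- Localisation of the stretched Brownian motion: if `κ` is the SBM kernel between `μ`
and `ν` (the maximiser of `∫ MCov(π_x, γ) μ(dx)` over martingale couplings), `B` is Borel
with `μ(B) > 0`, `μ^B` the normalized restriction and `ν^B = ∫ π_x^{SBM} μ^B(dx)`, then
`π^B = μ^B ⊗ κ` is the stretched Brownian motion between `μ^B` and `ν^B`. -/
theorem statement16 {d : ℕ} (μ ν : Measure (Eu d))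
    [IsProbabilityMeasure μ] [IsProbabilityMeasure ν]
    (h2μ : HasSnd μ) (h2ν : HasSnd ν) (hc : ConvexOrder μ ν)
    (κ : Kernel (Eu d) (Eu d)) [IsMarkovKernel κ]
    (hmarg : μ.bind (fun x => κ x) = ν)
    (hker : ∀ᵐ x ∂μ, MemP2x (κ x) x)
    (hopt : ∀ (κ' : Kernel (Eu d) (Eu d)), IsMarkovKernel κ' →
      μ.bind (fun x => κ' x) = ν → (∀ᵐ x ∂μ, MemP2x (κ' x) x) →
      ∫⁻ x, ENNReal.ofReal (MCov (κ' x) (stdGaussian d)) ∂μ ≤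
        ∫⁻ x, ENNReal.ofReal (MCov (κ x) (stdGaussian d)) ∂μ)
    (B : Set (Eu d)) (hB : MeasurableSet B) (hBpos : 0 < μ B)
    (μB : Measure (Eu d)) (hμB : μB = (μ B)⁻¹ • μ.restrict B)
    (νB : Measure (Eu d)) (hνB : νB = μB.bind (fun x => κ x)) :
    (∀ᵐ x ∂μB, MemP2x (κ x) x) ∧ μB.bind (fun x => κ x) = νB ∧
    (∀ (κ' : Kernel (Eu d) (Eu d)), IsMarkovKernel κ' →
      μB.bind (fun x => κ' x) = νB → (∀ᵐ x ∂μB, MemP2x (κ' x) x) →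
      ∫⁻ x, ENNReal.ofReal (MCov (κ' x) (stdGaussian d)) ∂μB ≤
        ∫⁻ x, ENNReal.ofReal (MCov (κ x) (stdGaussian d)) ∂μB) := by
  classical
  have hBne : μ B ≠ ∞ := (measure_lt_top μ B).ne
  have hcne : (μ B)⁻¹ ≠ 0 := ENNReal.inv_ne_zero.mpr hBne
  have haeB : ∀ᵐ x ∂μB, MemP2x (κ x) x := by
    rw [hμB, Measure.ae_ennreal_smul_measure_iff hcne]
    exact ae_restrict_of_ae hker
  refine ⟨haeB, hνB.symm, ?_⟩
  intro κ' hM' hmarg' hae'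
  have hres : μ.restrict B = μ B • μB := by
    rw [hμB, smul_smul, ENNReal.mul_inv_cancel hBpos.ne' hBne, one_smul]
  set f : Eu d → ℝ≥0∞ := fun x => ENNReal.ofReal (MCov (κ x) (stdGaussian d)) with hf
  set f' : Eu d → ℝ≥0∞ := fun x => ENNReal.ofReal (MCov (κ' x) (stdGaussian d)) with hf'
  have hfin : ∫⁻ x, f x ∂μ ≠ ∞ := lintegral_mcov_ne_top μ ν h2ν κ hmarg hker
  set κ'' : Kernel (Eu d) (Eu d) := Kernel.piecewise hB κ' κ with hκ''
  have hκ''B : ∀ x ∈ B, κ'' x = κ' x := fun x hx => by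
    rw [hκ'', Kernel.piecewise_apply, if_pos hx]
  have hκ''Bc : ∀ x ∈ Bᶜ, κ'' x = κ x := fun x hx => by
    rw [hκ'', Kernel.piecewise_apply, if_neg hx]
  -- the glued kernel has the right marginal
  have hbind : μ.bind (fun x => κ'' x) = ν := by
    ext s hs
    rw [Measure.bind_apply hs (Kernel.measurable κ'').aemeasurable, ← hmarg,
      Measure.bind_apply hs (Kernel.measurable κ).aemeasurable,
      ← lintegral_add_compl (fun x => (κ'' x) s) hB,
      ← lintegral_add_compl (fun x => (κ x) s) hB]
    congr 1
    · have h1 : ∫⁻ x in B, (κ'' x) s ∂μ = ∫⁻ x in B, (κ' x) s ∂μ :=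
        setLIntegral_congr_fun hB (fun x hx => by rw [hκ''B x hx])
    -- compare via νB
      have h2 : ∫⁻ x, (κ' x) s ∂μB = ∫⁻ x, (κ x) s ∂μB := by
        have hm : μB.bind (fun x => κ' x) = μB.bind (fun x => κ x) := by
          rw [hmarg', hνB]
        calc ∫⁻ x, (κ' x) s ∂μB = (μB.bind fun x => κ' x) s :=
              (Measure.bind_apply hs (Kernel.measurable κ').aemeasurable).symm
        _ = (μB.bind fun x => κ x) s := by rw [hm]
        _ = ∫⁻ x, (κ x) s ∂μB := Measure.bind_apply hs (Kernel.measurable κ).aemeasurable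
      have e' : ∫⁻ x in B, (κ' x) s ∂μ = μ B * ∫⁻ x, (κ' x) s ∂μB := by
        rw [show μ.restrict B = μ B • μB from hres, lintegral_smul_measure, smul_eq_mul]
      have e : ∫⁻ x in B, (κ x) s ∂μ = μ B * ∫⁻ x, (κ x) s ∂μB := by
        rw [show μ.restrict B = μ B • μB from hres, lintegral_smul_measure, smul_eq_mul]
      rw [h1, e', e, h2]
    · exact setLIntegral_congr_fun hB.compl
        (fun x hx => by rw [hκ''Bc x hx])
  -- the glued kernel is a.e. a martingale kernel with finite second moments
  have hae'' : ∀ᵐ x ∂μ, MemP2x (κ'' x) x := by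
    rw [← Measure.restrict_add_restrict_compl (μ := μ) hB, ae_add_measure_iff]
    constructor
    · have hB' : ∀ᵐ x ∂μ.restrict B, MemP2x (κ' x) x := by
        have := hae'
        rw [hμB, Measure.ae_ennreal_smul_measure_iff hcne] at this
        exact this
      filter_upwards [hB', ae_restrict_mem hB] with x hx hxB
      rw [hκ''B x hxB]
      exact hx
    · filter_upwards [ae_restrict_of_ae hker, ae_restrict_mem hB.compl] with x hx hxB
      rw [hκ''Bc x hxB]
      exact hx
  have key := hopt κ'' inferInstance hbind hae''
  have hl : ∫⁻ x, ENNReal.ofReal (MCov (κ'' x) (stdGaussian d)) ∂μ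
      = ∫⁻ x in B, f' x ∂μ + ∫⁻ x in Bᶜ, f x ∂μ := by
    rw [← lintegral_add_compl (fun x => ENNReal.ofReal (MCov (κ'' x) (stdGaussian d))) hB]
    congr 1
    · exact setLIntegral_congr_fun hB (fun x hx => by rw [hf', hκ''B x hx])
    · exact setLIntegral_congr_fun hB.compl (fun x hx => by rw [hf, hκ''Bc x hx])
  have hr : ∫⁻ x, f x ∂μ = ∫⁻ x in B, f x ∂μ + ∫⁻ x in Bᶜ, f x ∂μ :=
    (lintegral_add_compl f hB).symm
  rw [hl] at key
  rw [hr] at key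
  have hcfin : ∫⁻ x in Bᶜ, f x ∂μ ≠ ∞ := by
    exact ne_top_of_le_ne_top hfin (setLIntegral_le_lintegral _ _)
  have hBle : ∫⁻ x in B, f' x ∂μ ≤ ∫⁻ x in B, f x ∂μ :=
    (ENNReal.add_le_add_iff_right hcfin).mp key
  calc ∫⁻ x, f' x ∂μB = (μ B)⁻¹ * ∫⁻ x in B, f' x ∂μ := by
        rw [hμB, lintegral_smul_measure, smul_eq_mul]
  _ ≤ (μ B)⁻¹ * ∫⁻ x in B, f x ∂μ := mul_le_mul_right hBle _
  _ = ∫⁻ x, f x ∂μB := by rw [hμB, lintegral_smul_measure, smul_eq_mul]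
end
end
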